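/- Let R be the local model algebra described in the context. Then the number of ℂ-algebra homomorphisms χ : R → ℂ with χ(t) = 0 is exactly |G|/N. (Geometrically: the fiber of the covering q : C → ℙ¹ over the point p consists of exactly |A|/e_p points, where e_p = N is the common ramification index over p.) -/

import Mathlib

open Polynomial

noncomputable section

/-- The prime ideal `(t) ⊆ ℂ[t]`. -/
abbrev Spr : Ideal (Polynomial ℂ) := Ideal.span {(X : Polynomial ℂ)}

instance : Spr.IsPrime :=
  (Ideal.span_singleton_prime Polynomial.X_ne_zero).mpr Polynomial.prime_X

/-- `S = ℂ[t]_(t)`, the localization of `ℂ[t]` at the prime ideal `(t)`. -/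
abbrev Sloc := Localization.AtPrime Spr

instance SlocCommRing : CommRing Sloc := inferInstance
instance SlocCommSemiring : CommSemiring Sloc := SlocCommRing.toCommSemiring

/-- The element `t ∈ S`. -/
def tS : Sloc := algebraMap (Polynomial ℂ) Sloc X

/-- The residue map `ev₀ : S → ℂ`, `t ↦ 0`. -/
def ev₀ : Sloc →+* ℂ :=
  IsLocalization.lift (M := Spr.primeCompl) (S := Sloc)
    (g := Polynomial.evalRingHom (0 : ℂ))
    (fun y => by
      have hy : (y : Polynomial ℂ) ∉ Spr := y.2
      rw [isUnit_iff_ne_zero]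
      intro h0
      apply hy
      rw [Ideal.mem_span_singleton]
      refine Polynomial.X_dvd_iff.mpr ?_
      rw [Polynomial.coeff_zero_eq_eval_zero]
      simpa using h0)

/-- `λ(a,b) = ℓ̃(a) + ℓ̃(b) - ℓ̃(a+b)`, as a natural number. -/
def lamNat {G : Type} [AddCommGroup G] (ℓ : G → ℚ) (a b : G) : ℕ :=
  (ℓ a + ℓ b - ℓ (a + b)).num.toNat

/-- The ideal of relations `s₀ - 1` and `t^{λ(a,b)}·s_{a+b} - ε(a,b)·s_a·s_b`. -/
def relIdeal (G : Type) [AddCommGroup G] (ℓ : G → ℚ) (ε : G → G → Slocˣ) :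
    Ideal (MvPolynomial G Sloc) :=
  Ideal.span ({MvPolynomial.X 0 - 1} ∪
    Set.range (fun p : G × G =>
      MvPolynomial.C tS ^ lamNat ℓ p.1 p.2 * MvPolynomial.X (p.1 + p.2) -
        MvPolynomial.C ((ε p.1 p.2 : Sloc)) * MvPolynomial.X p.1 * MvPolynomial.X p.2))

/-- The local model algebra `R = S[s_a : a ∈ G]/I`. -/
abbrev LocalModel (G : Type) [AddCommGroup G] (ℓ : G → ℚ) (ε : G → G → Slocˣ) :=
  MvPolynomial G Sloc ⧸ relIdeal G ℓ ε

/-- The image of the variable `s_a` in `R`. -/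
def sVar {G : Type} [AddCommGroup G] (ℓ : G → ℚ) (ε : G → G → Slocˣ) (a : G) :
    LocalModel G ℓ ε :=
  Ideal.Quotient.mk (relIdeal G ℓ ε) (MvPolynomial.X a)

/-- The image of `t` in `R`. -/
def tR {G : Type} [AddCommGroup G] (ℓ : G → ℚ) (ε : G → G → Slocˣ) :
    LocalModel G ℓ ε :=
  algebraMap Sloc (LocalModel G ℓ ε) tS

/-- `N`, the lcm of the denominators of the `ℓ̃(a)`. -/
def ramOrder (G : Type) [AddCommGroup G] [Fintype G] (ℓ : G → ℚ) : ℕ :=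
  Finset.univ.lcm fun a : G => (ℓ a).den

lemma ev₀_algebraMap (p : Polynomial ℂ) : ev₀ (algebraMap (Polynomial ℂ) Sloc p) = p.eval 0 := by
  simp [ev₀, IsLocalization.lift_eq]

lemma ev₀_tS : ev₀ tS = 0 := by simp [tS, ev₀_algebraMap]

lemma ev₀_C (c : ℂ) : ev₀ (algebraMap ℂ Sloc c) = c := by
  rw [IsScalarTower.algebraMap_apply ℂ (Polynomial ℂ) Sloc, ev₀_algebraMap]
  simp

lemma ev₀_unique (f : Sloc →+* ℂ) (halg : ∀ c : ℂ, f (algebraMap ℂ Sloc c) = c)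
    (ht : f tS = 0) : f = ev₀ := by
  apply IsLocalization.ringHom_ext Spr.primeCompl
  apply Polynomial.ringHom_ext
  · intro c
    simp only [RingHom.comp_apply]
    rw [show algebraMap (Polynomial ℂ) Sloc (C c) = algebraMap ℂ Sloc c from
      (IsScalarTower.algebraMap_apply ℂ (Polynomial ℂ) Sloc c).symm]
    rw [halg, ev₀_C]
  · simp only [RingHom.comp_apply]
    rw [show algebraMap (Polynomial ℂ) Sloc X = tS from rfl, ht, ev₀_tS]

/-- `ev₀` as a `ℂ`-algebra hom. -/
def ev₀A : Sloc →ₐ[ℂ] ℂ := { ev₀ with commutes' := ev₀_C }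

section Sol
variable {G : Type} [AddCommGroup G] (ℓ : G → ℚ) (ε : G → G → Slocˣ)

/-- Solutions in `ℂ` of the defining equations. -/
def Sol : Type :=
  {x : G → ℂ // x 0 = 1 ∧ ∀ a b : G,
    (0 : ℂ) ^ lamNat ℓ a b * x (a + b) = ev₀ (ε a b) * x a * x b}

/-- The algebra hom determined by a solution. -/
def mkHom (x : Sol ℓ ε) : LocalModel G ℓ ε →ₐ[ℂ] ℂ :=
  Ideal.Quotient.liftₐ (relIdeal G ℓ ε) (MvPolynomial.aevalTower ev₀A x.1) (by
    intro p hp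
    refine Submodule.span_induction ?_ ?_ ?_ ?_ hp
    · rintro q (rfl | ⟨⟨a, b⟩, rfl⟩)
      · simp [x.2.1]
      · simp only [map_sub, map_mul, map_pow, MvPolynomial.aevalTower_X,
          MvPolynomial.aevalTower_C]
        have := x.2.2 a b
        simp only [ev₀A, AlgHom.coe_mk] at *
        rw [ev₀_tS]
        rw [sub_eq_zero]
        exact this
    · simp
    · intro a b _ _ ha hb; simp [ha, hb]
    · intro r a _ ha; simp [ha])

lemma mkHom_sVar (x : Sol ℓ ε) (a : G) : mkHom ℓ ε x (sVar ℓ ε a) = x.1 a := by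
  simp [mkHom, sVar, Ideal.Quotient.liftₐ_apply]
  erw [Ideal.Quotient.lift_mk]
  simp

lemma mkHom_const (x : Sol ℓ ε) (s : Sloc) :
    mkHom ℓ ε x (Ideal.Quotient.mk (relIdeal G ℓ ε) (MvPolynomial.C s)) = ev₀ s := by
  simp [mkHom, Ideal.Quotient.liftₐ_apply]
  erw [Ideal.Quotient.lift_mk]
  simp
  rfl

lemma algebraMap_LocalModel (s : Sloc) :
    algebraMap Sloc (LocalModel G ℓ ε) s
      = Ideal.Quotient.mk (relIdeal G ℓ ε) (MvPolynomial.C s) := rfl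

lemma mkHom_tR (x : Sol ℓ ε) : mkHom ℓ ε x (tR ℓ ε) = 0 := by
  rw [tR, algebraMap_LocalModel, mkHom_const, ev₀_tS]

variable {ℓ ε} in
lemma chi_const (χ : LocalModel G ℓ ε →ₐ[ℂ] ℂ) (hχ : χ (tR ℓ ε) = 0) (s : Sloc) :
    χ (Ideal.Quotient.mk (relIdeal G ℓ ε) (MvPolynomial.C s)) = ev₀ s := by
  have h : (χ.toRingHom.comp ((Ideal.Quotient.mk (relIdeal G ℓ ε)).comp
      (MvPolynomial.C (σ := G) (R := Sloc)))) = ev₀ := by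
    apply ev₀_unique
    · intro c
      have : (MvPolynomial.C (σ := G) (R := Sloc)) (algebraMap ℂ Sloc c)
          = algebraMap ℂ (MvPolynomial G Sloc) c := rfl
      simp only [RingHom.comp_apply, this]
      have h2 : (Ideal.Quotient.mk (relIdeal G ℓ ε)) (algebraMap ℂ (MvPolynomial G Sloc) c)
          = algebraMap ℂ (LocalModel G ℓ ε) c := rfl
      rw [h2]
      exact χ.commutes c
    · exact hχ
  exact DFunLike.congr_fun h s

variable {ℓ ε} in
lemma chi_rel (χ : LocalModel G ℓ ε →ₐ[ℂ] ℂ) (hχ : χ (tR ℓ ε) = 0) (a b : G) :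
    (0 : ℂ) ^ lamNat ℓ a b * χ (sVar ℓ ε (a + b))
      = ev₀ (ε a b) * χ (sVar ℓ ε a) * χ (sVar ℓ ε b) := by
  have hmem : (MvPolynomial.C tS ^ lamNat ℓ a b * MvPolynomial.X (a + b) -
      MvPolynomial.C ((ε a b : Sloc)) * MvPolynomial.X a * MvPolynomial.X b : MvPolynomial G Sloc)
      ∈ relIdeal G ℓ ε := by
    apply Ideal.subset_span
    exact Or.inr ⟨(a, b), rfl⟩
  have h0 : χ (Ideal.Quotient.mk (relIdeal G ℓ ε) (MvPolynomial.C tS ^ lamNat ℓ a b * MvPolynomial.X (a + b) -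
      MvPolynomial.C ((ε a b : Sloc)) * MvPolynomial.X a * MvPolynomial.X b)) = 0 := by
    rw [Ideal.Quotient.eq_zero_iff_mem.mpr hmem, map_zero]
  simp only [map_sub, map_mul, map_pow] at h0
  rw [sub_eq_zero] at h0
  rw [show ((Ideal.Quotient.mk (relIdeal G ℓ ε)) (MvPolynomial.X (a+b))) = sVar ℓ ε (a+b) from rfl,
    show ((Ideal.Quotient.mk (relIdeal G ℓ ε)) (MvPolynomial.X a)) = sVar ℓ ε a from rfl,
    show ((Ideal.Quotient.mk (relIdeal G ℓ ε)) (MvPolynomial.X b)) = sVar ℓ ε b from rfl,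
    chi_const χ hχ, chi_const χ hχ, ev₀_tS] at h0
  exact h0

variable {ℓ ε} in
lemma chi_s0 (χ : LocalModel G ℓ ε →ₐ[ℂ] ℂ) : χ (sVar ℓ ε 0) = 1 := by
  have hmem : (MvPolynomial.X 0 - 1 : MvPolynomial G Sloc) ∈ relIdeal G ℓ ε :=
    Ideal.subset_span (Or.inl rfl)
  have h0 : χ (Ideal.Quotient.mk (relIdeal G ℓ ε) (MvPolynomial.X 0 - 1)) = 0 := by
    rw [Ideal.Quotient.eq_zero_iff_mem.mpr hmem, map_zero]
  simp only [map_sub, map_one] at h0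
  rw [sub_eq_zero] at h0
  exact h0

/-- The equivalence between points over `0` and solutions. -/
def pointsEquivSol : {χ : LocalModel G ℓ ε →ₐ[ℂ] ℂ // χ (tR ℓ ε) = 0} ≃ Sol ℓ ε where
  toFun χ := ⟨fun a => χ.1 (sVar ℓ ε a), chi_s0 χ.1, chi_rel χ.1 χ.2⟩
  invFun x := ⟨mkHom ℓ ε x, mkHom_tR ℓ ε x⟩
  left_inv := by
    rintro ⟨χ, hχ⟩
    ext1
    apply AlgHom.coe_ringHom_injective
    apply Ideal.Quotient.ringHom_ext
    apply MvPolynomial.ringHom_ext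
    · intro s
      simp only [RingHom.comp_apply]
      show mkHom ℓ ε _ (Ideal.Quotient.mk _ (MvPolynomial.C s)) = χ (Ideal.Quotient.mk _ (MvPolynomial.C s))
      rw [chi_const χ hχ]
      exact mkHom_const ℓ ε _ s
    · intro a
      show mkHom ℓ ε _ (Ideal.Quotient.mk _ (MvPolynomial.X a)) = χ (Ideal.Quotient.mk _ (MvPolynomial.X a))
      exact mkHom_sVar ℓ ε _ a
  right_inv := by
    intro x
    apply Subtype.ext
    funext a
    exact mkHom_sVar ℓ ε x a

end Sol

section Ell
variable {G : Type} [AddCommGroup G] {ℓ : G → ℚ}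

lemma rat_num_cast_of_den_one {q : ℚ} (h : q.den = 1) : (q.num : ℚ) = q := by
  conv_rhs => rw [← Rat.num_div_den q, h]
  simp

lemma rat_eq_zero_of_den_one {q : ℚ} (h : q.den = 1) (h0 : 0 ≤ q) (h1 : q < 1) : q = 0 := by
  have hc := rat_num_cast_of_den_one h
  have h0' : 0 ≤ q.num := Rat.num_nonneg.mpr h0
  have h1' : q.num < 1 := by
    by_contra hh
    push_neg at hh
    have : (1 : ℚ) ≤ (q.num : ℚ) := by exact_mod_cast hh
    rw [hc] at this
    linarith
  have : q.num = 0 := by omega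
  rw [← hc, this, Int.cast_zero]

lemma lamNat_cast (hnn : ∀ a, 0 ≤ ℓ a) (hlt : ∀ a, ℓ a < 1)
    (hint : ∀ a b, (ℓ a + ℓ b - ℓ (a + b)).den = 1) (a b : G) :
    (lamNat ℓ a b : ℚ) = ℓ a + ℓ b - ℓ (a + b) := by
  set q : ℚ := ℓ a + ℓ b - ℓ (a + b) with hq
  have hden : (q.num : ℚ) = q := rat_num_cast_of_den_one (hint a b)
  have hqgt : (-1 : ℚ) < q := by
    have := hnn a; have := hnn b; have := hlt (a + b); rw [hq]; linarith
  have hnum : 0 ≤ q.num := by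
    by_contra h
    push_neg at h
    have h'' : q.num ≤ -1 := by omega
    have h' : (q.num : ℚ) ≤ -1 := by exact_mod_cast h''
    rw [hden] at h'; linarith
  show ((q.num.toNat : ℚ)) = q
  rw [show ((q.num.toNat : ℚ)) = ((q.num.toNat : ℤ) : ℚ) by push_cast; ring,
    Int.toNat_of_nonneg hnum, hden]

lemma lamNat_eq_zero_iff (hnn : ∀ a, 0 ≤ ℓ a) (hlt : ∀ a, ℓ a < 1)
    (hint : ∀ a b, (ℓ a + ℓ b - ℓ (a + b)).den = 1) (a b : G) :
    lamNat ℓ a b = 0 ↔ ℓ (a + b) = ℓ a + ℓ b := by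
  rw [← Nat.cast_inj (R := ℚ), lamNat_cast hnn hlt hint]
  push_cast
  constructor <;> intro h <;> linarith

/-- The subgroup where `ℓ` vanishes. -/
def kerSub (ℓ : G → ℚ) (hℓ0 : ℓ 0 = 0) (hnn : ∀ a, 0 ≤ ℓ a) (hlt : ∀ a, ℓ a < 1)
    (hint : ∀ a b, (ℓ a + ℓ b - ℓ (a + b)).den = 1) : AddSubgroup G where
  carrier := {a | ℓ a = 0}
  zero_mem' := hℓ0
  add_mem' := by
    intro a b (ha : ℓ a = 0) (hb : ℓ b = 0)
    have h := hint a b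
    rw [ha, hb] at h
    simp only [add_zero, zero_sub] at h
    show ℓ (a + b) = 0
    have h' : (ℓ (a + b)).den = 1 := by
      have : (-(ℓ (a + b))).den = (ℓ (a + b)).den := Rat.neg_den _
      omega
    exact rat_eq_zero_of_den_one h' (hnn _) (hlt _)
  neg_mem' := by
    intro a (ha : ℓ a = 0)
    have h := hint a (-a)
    rw [ha, add_neg_cancel, hℓ0] at h
    simp only [zero_add, sub_zero] at h
    exact rat_eq_zero_of_den_one h (hnn _) (hlt _)

end Ell

section Vanish
variable {G : Type} [AddCommGroup G] {ℓ : G → ℚ} {ε : G → G → Slocˣ}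

omit [AddCommGroup G] in
lemma ev_eps_ne_zero (a b : G) : ev₀ ((ε a b : Sloc)) ≠ 0 :=
  ((ε a b).isUnit.map ev₀).ne_zero

lemma sol_nsmul (hℓ0 : ℓ 0 = 0) (hnn : ∀ a, 0 ≤ ℓ a) (hlt : ∀ a, ℓ a < 1)
    (hint : ∀ a b, (ℓ a + ℓ b - ℓ (a + b)).den = 1)
    (x : Sol ℓ ε) {a : G} (hxa : x.1 a ≠ 0) :
    ∀ j : ℕ, x.1 (j • a) ≠ 0 ∧ ℓ (j • a) = j * ℓ a := by
  intro j
  induction j with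
  | zero => simpa using ⟨by rw [x.2.1]; exact one_ne_zero, hℓ0⟩
  | succ j ih =>
    have hrel := x.2.2 (j • a) a
    rw [show j • a + a = (j + 1) • a by rw [succ_nsmul]] at hrel
    have hrhs : ev₀ ((ε (j • a) a : Sloc)) * x.1 (j • a) * x.1 a ≠ 0 :=
      mul_ne_zero (mul_ne_zero (ev_eps_ne_zero _ _) ih.1) hxa
    have hlam : lamNat ℓ (j • a) a = 0 := by
      by_contra hne
      rw [zero_pow hne, zero_mul] at hrel
      exact hrhs hrel.symm
    rw [hlam, pow_zero, one_mul] at hrel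
    have hadd : ℓ ((j + 1) • a) = ℓ (j • a) + ℓ a := by
      have := (lamNat_eq_zero_iff hnn hlt hint (j • a) a).mp hlam
      rwa [show j • a + a = (j + 1) • a by rw [succ_nsmul]] at this
    refine ⟨by rw [hrel]; exact hrhs, ?_⟩
    rw [hadd, ih.2]
    push_cast
    ring

lemma sol_vanish (hℓ0 : ℓ 0 = 0) (hnn : ∀ a, 0 ≤ ℓ a) (hlt : ∀ a, ℓ a < 1)
    (hint : ∀ a b, (ℓ a + ℓ b - ℓ (a + b)).den = 1)
    (x : Sol ℓ ε) {a : G} (ha : ℓ a ≠ 0) : x.1 a = 0 := by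
  by_contra hxa
  have h := (sol_nsmul hℓ0 hnn hlt hint x hxa ((ℓ a).den)).2
  have hlt' := hlt ((ℓ a).den • a)
  rw [h] at hlt'
  have hden : ((ℓ a).den : ℚ) * ℓ a = (ℓ a).num := by
    have h3 : ((ℓ a).den : ℚ) ≠ 0 := Nat.cast_ne_zero.mpr (ℓ a).den_nz
    rw [mul_comm, ← eq_div_iff h3]
    exact (Rat.num_div_den (ℓ a)).symm
  rw [hden] at hlt'
  have hpos : 0 < ℓ a := lt_of_le_of_ne (hnn a) (Ne.symm ha)
  have : 1 ≤ (ℓ a).num := by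
    have := Rat.num_pos.mpr hpos
    omega
  have : (1 : ℚ) ≤ ((ℓ a).num : ℚ) := by exact_mod_cast this
  linarith

end Vanish

section YSolSec
variable {G : Type} [AddCommGroup G]

/-- Solutions on the kernel subgroup: a trivialization of the restricted cocycle. -/
def YSol (H : AddSubgroup G) (ε : G → G → Slocˣ) : Type :=
  {y : H → ℂ // y 0 = 1 ∧ ∀ a b : H,
    y (a + b) = ev₀ ((ε (a : G) (b : G) : Sloc)) * y a * y b}

variable {ℓ : G → ℚ} {ε : G → G → Slocˣ}
  (hℓ0 : ℓ 0 = 0) (hnn : ∀ a, 0 ≤ ℓ a) (hlt : ∀ a, ℓ a < 1)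
  (hint : ∀ a b, (ℓ a + ℓ b - ℓ (a + b)).den = 1)

open Classical in
/-- impl -/
def solEquivYSol : Sol ℓ ε ≃ YSol (kerSub ℓ hℓ0 hnn hlt hint) ε where
  toFun x := ⟨fun a => x.1 (a : G), by exact x.2.1, by
    intro a b
    have hrel := x.2.2 (a : G) (b : G)
    have hlam : lamNat ℓ (a : G) (b : G) = 0 := by
      rw [lamNat_eq_zero_iff hnn hlt hint]
      have hab : ((a : G) + (b : G)) ∈ kerSub ℓ hℓ0 hnn hlt hint := add_mem a.2 b.2
      have : ℓ ((a : G) + (b : G)) = 0 := hab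
      rw [this, show ℓ (a : G) = 0 from a.2, show ℓ (b : G) = 0 from b.2]
      ring
    rw [hlam, pow_zero, one_mul] at hrel
    exact hrel⟩
  invFun y := ⟨fun a => if h : a ∈ kerSub ℓ hℓ0 hnn hlt hint then y.1 ⟨a, h⟩ else 0, by
      show dite _ _ _ = 1
      rw [dif_pos (zero_mem _)]; exact y.2.1, by
    show ∀ a b : G, _ = _
    intro a b
    beta_reduce
    by_cases ha : a ∈ kerSub ℓ hℓ0 hnn hlt hint
    · by_cases hb : b ∈ kerSub ℓ hℓ0 hnn hlt hint
      · have hab : a + b ∈ kerSub ℓ hℓ0 hnn hlt hint := add_mem ha hb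
        have hlam : lamNat ℓ a b = 0 := by
          rw [lamNat_eq_zero_iff hnn hlt hint]
          rw [show ℓ (a+b) = 0 from hab, show ℓ a = 0 from ha, show ℓ b = 0 from hb]; ring
        rw [hlam, pow_zero, one_mul, dif_pos ha, dif_pos hb, dif_pos hab]
        exact y.2.2 ⟨a, ha⟩ ⟨b, hb⟩
      · have hab : a + b ∉ kerSub ℓ hℓ0 hnn hlt hint := by
          intro h
          exact hb (by simpa using sub_mem h ha : b ∈ _)
        rw [dif_neg hab, dif_neg hb, mul_zero, mul_zero]
    · have hrhs : ev₀ ((ε a b : Sloc)) * (if h : a ∈ kerSub ℓ hℓ0 hnn hlt hint then y.1 ⟨a, h⟩ else 0) *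
          (if h : b ∈ kerSub ℓ hℓ0 hnn hlt hint then y.1 ⟨b, h⟩ else 0) = 0 := by
        rw [dif_neg ha]; ring
      rw [hrhs]
      by_cases hab : a + b ∈ kerSub ℓ hℓ0 hnn hlt hint
      · have hlam : lamNat ℓ a b ≠ 0 := by
          intro h
          rw [lamNat_eq_zero_iff hnn hlt hint] at h
          rw [show ℓ (a+b) = 0 from hab] at h
          have := hnn a; have := hnn b
          exact ha (by linarith : ℓ a = 0)
        rw [zero_pow hlam, zero_mul]
      · rw [dif_neg hab, mul_zero]⟩
  left_inv x := by
    apply Subtype.ext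
    funext a
    show (if h : a ∈ kerSub ℓ hℓ0 hnn hlt hint then x.1 a else 0) = x.1 a
    by_cases ha : a ∈ kerSub ℓ hℓ0 hnn hlt hint
    · rw [dif_pos ha]
    · rw [dif_neg ha]
      exact (sol_vanish hℓ0 hnn hlt hint x ha).symm
  right_inv y := by
    apply Subtype.ext
    funext a
    show (if h : (a : G) ∈ kerSub ℓ hℓ0 hnn hlt hint then y.1 ⟨(a : G), h⟩ else 0) = y.1 a
    rw [dif_pos a.2]

end YSolSec

section Split

/-- Roots exist in `ℂˣ`. -/
noncomputable instance : RootableBy ℂˣ ℕ :=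
  rootableByOfPowLeftSurj _ _ (by
    intro n hn v
    obtain ⟨z, hz⟩ := IsAlgClosed.exists_pow_nat_eq (k := ℂ) (v : ℂ) (Nat.pos_of_ne_zero hn)
    have hz0 : z ≠ 0 := by
      intro h0
      rw [h0, zero_pow hn] at hz
      exact v.ne_zero hz.symm
    refine ⟨Units.mk0 z hz0, ?_⟩
    ext
    simpa using hz)

noncomputable instance : RootableBy ℂˣ ℤ := Group.rootableByIntOfRootableByNat _

noncomputable instance : DivisibleBy (Additive ℂˣ) ℤ where
  div a n := Additive.ofMul (RootableBy.root (Additive.toMul a) n)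
  div_zero a := congrArg Additive.ofMul (RootableBy.root_zero _)
  div_cancel a hn := by
    have := RootableBy.root_cancel (α := ℤ) (Additive.toMul a) hn
    rw [← ofMul_zpow]
    rw [this]
    rfl

variable {H : Type} [AddCommGroup H]

/-- Carrier of the twisted extension. -/
structure TwC (H : Type) : Type where
  u : ℂˣ
  g : H

section TwOps
variable (e : H → H → ℂˣ)

/-- twisted addition -/
def twAdd (x y : TwC H) : TwC H := ⟨x.u * y.u * e x.g y.g, x.g + y.g⟩

/-- twisted zero -/
def twZero : TwC H := ⟨1, 0⟩

/-- twisted negation -/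
def twNeg (x : TwC H) : TwC H := ⟨(x.u * e x.g (-x.g))⁻¹, -x.g⟩

variable (hsym : ∀ a b, e a b = e b a) (hone : ∀ a, e a 0 = 1)
  (hcoc : ∀ a b c, e a b * e (a + b) c = e a (b + c) * e b c)

include hcoc in
lemma twAdd_assoc (x y z : TwC H) : twAdd e (twAdd e x y) z = twAdd e x (twAdd e y z) := by
  unfold twAdd
  simp only [TwC.mk.injEq]
  refine ⟨?_, add_assoc _ _ _⟩
  have hc : (e x.g y.g : ℂ) * e (x.g + y.g) z.g = e x.g (y.g + z.g) * e y.g z.g := by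
    exact_mod_cast hcoc x.g y.g z.g
  rw [Units.ext_iff]
  push_cast
  linear_combination (x.u : ℂ) * y.u * z.u * hc

include hsym hone in
lemma twZero_add (x : TwC H) : twAdd e (twZero) x = x := by
  unfold twAdd twZero
  have h0 : e 0 x.g = 1 := by rw [hsym, hone]
  simp [h0]

include hone in
lemma twAdd_zero (x : TwC H) : twAdd e x (twZero) = x := by
  unfold twAdd twZero
  simp [hone]

include hsym in
lemma twNeg_add (x : TwC H) : twAdd e (twNeg e x) x = twZero := by
  unfold twAdd twNeg twZero
  simp only [TwC.mk.injEq]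
  refine ⟨?_, neg_add_cancel _⟩
  rw [hsym (-x.g) x.g]
  group

include hsym in
lemma twAdd_comm (x y : TwC H) : twAdd e x y = twAdd e y x := by
  unfold twAdd
  simp only [TwC.mk.injEq]
  exact ⟨by rw [hsym x.g y.g, mul_comm x.u y.u], add_comm _ _⟩

/-- The twisted group structure. -/
def twGroup : AddCommGroup (TwC H) :=
  letI : Zero (TwC H) := ⟨twZero⟩
  letI : Add (TwC H) := ⟨twAdd e⟩
  letI : Neg (TwC H) := ⟨twNeg e⟩
  { add := (· + ·)
    zero := (0 : TwC H)
    neg := Neg.neg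
    nsmul := nsmulRec
    zsmul := zsmulRec
    add_assoc := twAdd_assoc e hcoc
    zero_add := twZero_add e hsym hone
    add_zero := twAdd_zero e hone
    neg_add_cancel := twNeg_add e hsym
    add_comm := twAdd_comm e hsym }

end TwOps

open CategoryTheory in
/-- Splitting of a symmetric normalized 2-cocycle valued in `ℂˣ`. -/
lemma exists_trivialization (e : H → H → ℂˣ) (hsym : ∀ a b, e a b = e b a)
    (hone : ∀ a, e a 0 = 1)
    (hcoc : ∀ a b c, e a b * e (a + b) c = e a (b + c) * e b c) :
    ∃ y : H → ℂˣ, y 0 = 1 ∧ ∀ a b, y (a + b) = e a b * y a * y b := by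
  letI : AddCommGroup (TwC H) := twGroup e hsym hone hcoc
  -- the inclusion of `ℂˣ`
  have h00 : e 0 0 = 1 := hone 0
  let iH : Additive ℂˣ →+ TwC H :=
    { toFun := fun u => ⟨Additive.toMul u, 0⟩
      map_zero' := by with_unfolding_all rfl
      map_add' := by
        intro u v
        show TwC.mk (Additive.toMul (u + v)) 0 = TwC.mk (Additive.toMul u * Additive.toMul v * e 0 0) (0 + 0)
        rw [h00, mul_one, add_zero]
        rfl }
  have hinj : Function.Injective iH := by
    intro u v huv
    have : (⟨Additive.toMul u, 0⟩ : TwC H) = ⟨Additive.toMul v, 0⟩ := huv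
    have h2 := congrArg TwC.u this
    exact Additive.toMul.injective h2
  letI imono : CategoryTheory.Mono (AddCommGrpCat.ofHom iH) :=
    (AddCommGrpCat.mono_iff_injective _).mpr hinj
  letI : CategoryTheory.Injective (AddCommGrpCat.of (Additive ℂˣ)) :=
    AddCommGrpCat.injective_of_divisible _
  let rc : AddCommGrpCat.of (TwC H) ⟶ AddCommGrpCat.of (Additive ℂˣ) :=
    CategoryTheory.Injective.factorThru (𝟙 (AddCommGrpCat.of (Additive ℂˣ))) (AddCommGrpCat.ofHom iH)
  let r : TwC H →+ Additive ℂˣ := rc.hom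
  have hr : ∀ u : Additive ℂˣ, r (iH u) = u := by
    intro u
    have h1 := CategoryTheory.Injective.comp_factorThru (𝟙 (AddCommGrpCat.of (Additive ℂˣ)))
      (AddCommGrpCat.ofHom iH)
    have h2 := ConcreteCategory.congr_hom h1 u
    exact h2
  -- the set-theoretic section
  let σ : H → TwC H := fun h => ⟨1, h⟩
  have hσ : ∀ a b : H, σ a + σ b = iH (Additive.ofMul (e a b)) + σ (a + b) := by
    intro a b
    show TwC.mk (1 * 1 * e a b) (a + b) = TwC.mk (e a b * 1 * e 0 (a + b)) (0 + (a + b))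
    rw [hsym 0 (a + b), hone, one_mul, one_mul, mul_one, mul_one, zero_add]
  -- the trivialization
  let t : H → ℂˣ := fun h => Additive.toMul (r (σ h))
  have ht : ∀ a b : H, t a * t b = e a b * t (a + b) := by
    intro a b
    have h1 : r (σ a) + r (σ b) = Additive.ofMul (e a b) + r (σ (a + b)) := by
      rw [← map_add, hσ a b, map_add, hr]
    exact h1
  have ht0 : t 0 = 1 := by
    have : σ 0 = iH 0 := rfl
    show Additive.toMul (r (σ 0)) = 1
    rw [this, hr]
    rfl
  refine ⟨fun h => (t h)⁻¹, by show (t 0)⁻¹ = 1; rw [ht0, inv_one], ?_⟩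
  intro a b
  show (t (a + b))⁻¹ = e a b * (t a)⁻¹ * (t b)⁻¹
  have h3 := ht a b
  rw [Units.ext_iff] at h3 ⊢
  push_cast at h3 ⊢
  field_simp
  linear_combination h3

end Split

section YCount
variable {G : Type} [AddCommGroup G] (H : AddSubgroup G) (ε : G → G → Slocˣ)

lemma ysol_ne_zero {z : YSol H ε} (a : H) : z.1 a ≠ 0 := by
  intro h0
  have h1 := z.2.2 a (-a)
  rw [add_neg_cancel, z.2.1, h0] at h1
  simp at h1

variable (hε_symm : ∀ a b : G, ε a b = ε b a) (hε_one : ∀ a : G, ε a 0 = 1)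
  (hε_coc : ∀ a b c : G, ε a b * ε (a + b) c = ε a (b + c) * ε b c)

include hε_symm hε_one hε_coc in
lemma ysol_nonempty : Nonempty (YSol H ε) := by
  obtain ⟨y, hy0, hy⟩ := exists_trivialization
    (fun a b : H => Units.map ev₀.toMonoidHom (ε (a : G) (b : G)))
    (fun a b => by beta_reduce; rw [hε_symm])
    (fun a => by
      beta_reduce
      rw [show ((0 : H) : G) = 0 from rfl, hε_one]
      simp)
    (fun a b c => by
      beta_reduce
      rw [← map_mul, ← map_mul]
      congr 1
      rw [show (((a + b) : H) : G) = (a : G) + (b : G) from rfl,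
        show (((b + c) : H) : G) = (b : G) + (c : G) from rfl]
      exact hε_coc _ _ _)
  refine ⟨⟨fun a => ((y a : ℂˣ) : ℂ), ?_, ?_⟩⟩
  · show ((y 0 : ℂˣ) : ℂ) = 1
    rw [hy0]; rfl
  · intro a b
    show ((y (a + b) : ℂˣ) : ℂ) = _ * ((y a : ℂˣ) : ℂ) * ((y b : ℂˣ) : ℂ)
    have h5 := congrArg (Units.val) (hy a b)
    push_cast at h5
    rw [h5]
    rfl

/-- Given a base point, `YSol` is equivalent to the character group. -/
def ysolEquivAddChar (y₀ : YSol H ε) : YSol H ε ≃ AddChar H ℂ where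
  toFun z :=
    { toFun := fun a => z.1 a * (y₀.1 a)⁻¹
      map_zero_eq_one' := by beta_reduce; rw [z.2.1, y₀.2.1]; norm_num
      map_add_eq_mul' := by
        intro a b
        beta_reduce
        have hz := z.2.2 a b
        have hy := y₀.2.2 a b
        rw [hz, hy]
        have h1 : ev₀ ((ε (a : G) (b : G) : Sloc)) ≠ 0 := ev_eps_ne_zero _ _
        have h2 : y₀.1 a ≠ 0 := ysol_ne_zero H ε a
        have h3 : y₀.1 b ≠ 0 := ysol_ne_zero H ε b
        field_simp }
  invFun φ := ⟨fun a => φ a * y₀.1 a, by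
      beta_reduce
      rw [AddChar.map_zero_eq_one, y₀.2.1, one_mul], by
    intro a b
    beta_reduce
    have hy := y₀.2.2 a b
    rw [AddChar.map_add_eq_mul, hy]
    ring⟩
  left_inv z := by
    apply Subtype.ext
    funext a
    show z.1 a * (y₀.1 a)⁻¹ * y₀.1 a = z.1 a
    have h2 : y₀.1 a ≠ 0 := ysol_ne_zero H ε a
    field_simp
  right_inv φ := by
    ext a
    show φ a * y₀.1 a * (y₀.1 a)⁻¹ = φ a
    have h2 : y₀.1 a ≠ 0 := ysol_ne_zero H ε a
    field_simp

include hε_symm hε_one hε_coc in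
lemma ysol_card [Finite H] : Nat.card (YSol H ε) = Nat.card H := by
  obtain ⟨y₀⟩ := ysol_nonempty H ε hε_symm hε_one hε_coc
  rw [Nat.card_congr (ysolEquivAddChar H ε y₀)]
  have : Fintype H := Fintype.ofFinite _
  rw [Nat.card_eq_fintype_card, Nat.card_eq_fintype_card, AddChar.card_eq]

end YCount

section Arith
variable {G : Type} [AddCommGroup G] [Fintype G] {ℓ : G → ℚ}

lemma rat_num_eq (q : ℚ) : (q.num : ℚ) = q * q.den := by
  have hden0 : ((q.den : ℚ)) ≠ 0 := Nat.cast_ne_zero.mpr q.den_nz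
  calc (q.num : ℚ) = (q.num / q.den) * q.den := by field_simp
    _ = q * q.den := by rw [Rat.num_div_den]

lemma ramOrder_pos (ℓ : G → ℚ) : 0 < ramOrder G ℓ := by
  rw [Nat.pos_iff_ne_zero, ramOrder]
  intro h
  rw [Finset.lcm_eq_zero_iff] at h
  obtain ⟨a, _, ha⟩ := h
  exact (ℓ a).den_nz ha

lemma kerSub_card (hℓ0 : ℓ 0 = 0) (hnn : ∀ a, 0 ≤ ℓ a) (hlt : ∀ a, ℓ a < 1)
    (hint : ∀ a b, (ℓ a + ℓ b - ℓ (a + b)).den = 1) :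
    ramOrder G ℓ * Nat.card (kerSub ℓ hℓ0 hnn hlt hint) = Fintype.card G := by
  set N := ramOrder G ℓ with hN
  have hNpos : 0 < N := ramOrder_pos ℓ
  haveI : NeZero N := ⟨hNpos.ne'⟩
  have hdvd : ∀ a : G, (ℓ a).den ∣ N := fun a => Finset.dvd_lcm (Finset.mem_univ a)
  -- the integer values N * ℓ a
  set v : G → ℤ := fun a => (ℓ a).num * (N / (ℓ a).den : ℕ) with hv
  have hvQ : ∀ a : G, (v a : ℚ) = N * ℓ a := by
    intro a
    obtain ⟨w, hw⟩ : ∃ w : ℕ, w * (ℓ a).den = N := ⟨_, Nat.div_mul_cancel (hdvd a)⟩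
    have hw' : N / (ℓ a).den = w := by rw [← hw, Nat.mul_div_cancel _ (ℓ a).pos]
    have hva : v a = (ℓ a).num * (w : ℤ) := by rw [hv]; beta_reduce; rw [hw']
    rw [hva]
    push_cast
    rw [rat_num_eq (ℓ a), ← hw]
    push_cast
    ring
  -- the homomorphism to ZMod N
  set f : G →+ ZMod N := AddMonoidHom.mk' (fun a => ((v a : ℤ) : ZMod N)) (by
    intro a b
    have hz : v (a + b) = v a + v b - (N : ℤ) * lamNat ℓ a b := by
      have : (v (a + b) : ℚ) = (v a : ℚ) + v b - N * lamNat ℓ a b := by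
        rw [hvQ, hvQ, hvQ, lamNat_cast hnn hlt hint]
        ring
      exact_mod_cast this
    beta_reduce
    rw [hz]
    push_cast
    rw [ZMod.natCast_self]
    ring) with hf
  have hfa : ∀ a : G, f a = ((v a : ℤ) : ZMod N) := fun a => rfl
  -- kernel is kerSub
  have hker : ∀ a : G, f a = 0 ↔ ℓ a = 0 := by
    intro a
    rw [hfa]
    constructor
    · intro h
      have hd : (N : ℤ) ∣ v a := by
        rwa [ZMod.intCast_zmod_eq_zero_iff_dvd] at h
      obtain ⟨k, hk⟩ := hd
      have hQ : (N : ℚ) * ℓ a = N * k := by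
        rw [← hvQ, hk]; push_cast; ring
      have hNQ : (N : ℚ) ≠ 0 := Nat.cast_ne_zero.mpr hNpos.ne'
      have hℓk : ℓ a = (k : ℚ) := mul_left_cancel₀ hNQ hQ
      have h0 : (0 : ℤ) ≤ k := by
        have := hnn a; rw [hℓk] at this; exact_mod_cast this
      have h1 : k < 1 := by
        have := hlt a; rw [hℓk] at this; exact_mod_cast this
      have : k = 0 := by omega
      rw [hℓk, this, Int.cast_zero]
    · intro h
      have : v a = 0 := by
        have : (v a : ℚ) = 0 := by rw [hvQ, h, mul_zero]
        exact_mod_cast this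
      rw [this, Int.cast_zero]
  -- surjectivity
  have hsurj : Function.Surjective f := by
    rw [← AddMonoidHom.range_eq_top]
    set K := f.range with hK
    have hfin : Finite K := Subtype.finite
    have hcKpos : 0 < Nat.card K := Nat.card_pos
    have hdvd2 : ∀ a : G, (ℓ a).den ∣ Nat.card K := by
      intro a
      have hmem : f a ∈ K := ⟨a, rfl⟩
      have h1 : Nat.card K • (⟨f a, hmem⟩ : K) = 0 := card_nsmul_eq_zero'
      have h2 : Nat.card K • f a = 0 := by
        have h2' := congrArg (AddSubgroup.subtype K) h1
        rw [map_nsmul, map_zero] at h2'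
        exact h2'
      have h3 : ((Nat.card K * v a : ℤ) : ZMod N) = 0 := by
        push_cast
        rw [← hfa, ← nsmul_eq_mul]
        exact h2
      rw [ZMod.intCast_zmod_eq_zero_iff_dvd] at h3
      -- v a * den = num * N
      have hvden : v a * (ℓ a).den = (ℓ a).num * N := by
        have hq : ((v a : ℚ)) * (ℓ a).den = ((ℓ a).num : ℚ) * N := by
          rw [hvQ, rat_num_eq (ℓ a)]
          ring
        exact_mod_cast hq
      have h4 : (N : ℤ) * (ℓ a).den ∣ (Nat.card K : ℤ) * ((ℓ a).num * N) := by
        rw [← hvden, show (Nat.card K : ℤ) * (v a * (ℓ a).den)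
            = Nat.card K * v a * (ℓ a).den by ring]
        exact mul_dvd_mul h3 dvd_rfl
      have h5 : ((ℓ a).den : ℤ) ∣ (Nat.card K : ℤ) * (ℓ a).num := by
        have hN0 : (N : ℤ) ≠ 0 := by exact_mod_cast hNpos.ne'
        rcases h4 with ⟨c, hc⟩
        refine ⟨c, ?_⟩
        have heq : (N : ℤ) * ((Nat.card K : ℤ) * (ℓ a).num) = N * ((ℓ a).den * c) := by
          rw [show (N:ℤ) * ((Nat.card K : ℤ) * (ℓ a).num)
              = (Nat.card K : ℤ) * ((ℓ a).num * N) by ring, hc]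
          ring
        exact mul_left_cancel₀ hN0 heq
      have hcop : Nat.Coprime (ℓ a).num.natAbs (ℓ a).den := (ℓ a).reduced
      have h6 : (ℓ a).den ∣ Nat.card K * (ℓ a).num.natAbs := by
        have := Int.natAbs_dvd_natAbs.mpr h5
        simpa [Int.natAbs_mul] using this
      exact Nat.Coprime.dvd_of_dvd_mul_right (Nat.Coprime.symm hcop) h6
    have hNdvd : N ∣ Nat.card K := Finset.lcm_dvd fun a _ => hdvd2 a
    have hle : Nat.card K ≤ N := by
      have h7 : Nat.card K ≤ Nat.card (ZMod N) :=
        Nat.card_le_card_of_injective _ (AddSubgroup.subtype_injective K)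
      rwa [Nat.card_zmod] at h7
    have hcK : Nat.card K = N := le_antisymm hle (Nat.le_of_dvd hcKpos hNdvd)
    exact AddSubgroup.eq_top_of_card_eq _ (by rw [hcK, Nat.card_zmod])
  -- conclude
  have hkereq : f.ker = kerSub ℓ hℓ0 hnn hlt hint := by
    ext a
    rw [AddMonoidHom.mem_ker]
    exact hker a
  have hcard1 : Nat.card G = Nat.card (G ⧸ f.ker) * Nat.card f.ker :=
    AddSubgroup.card_eq_card_quotient_mul_card_addSubgroup _
  have hquote : Nat.card (G ⧸ f.ker) = N := by
    rw [Nat.card_congr (QuotientAddGroup.quotientKerEquivOfSurjective f hsurj).toEquiv,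
      Nat.card_zmod]
  rw [← hkereq, ← Nat.card_eq_fintype_card, hcard1, hquote]

end Arith


/-- The number of `ℂ`-algebra homomorphisms `χ : R → ℂ` with `χ(t) = 0`
is exactly `|G|/N` (the fiber of the covering over `p` has `|A|/e_p` points). -/
theorem localModel_card_points_over_zero
    (G : Type) [AddCommGroup G] [Fintype G]
    (ℓ : G → ℚ) (hℓ0 : ℓ 0 = 0) (hℓ_nonneg : ∀ a, 0 ≤ ℓ a) (hℓ_lt : ∀ a, ℓ a < 1)
    (hℓ_int : ∀ a b, (ℓ a + ℓ b - ℓ (a + b)).den = 1)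
    (ε : G → G → Slocˣ)
    (hε_symm : ∀ a b, ε a b = ε b a)
    (hε_one : ∀ a, ε a 0 = 1)
    (hε_coc : ∀ a b c, ε a b * ε (a + b) c = ε a (b + c) * ε b c) :
    Nat.card {χ : LocalModel G ℓ ε →ₐ[ℂ] ℂ // χ (tR ℓ ε) = 0} =
      Fintype.card G / ramOrder G ℓ := by
  rw [Nat.card_congr (pointsEquivSol ℓ ε),
    Nat.card_congr (solEquivYSol hℓ0 hℓ_nonneg hℓ_lt hℓ_int),
    ysol_card _ ε hε_symm hε_one hε_coc]
  exact (Nat.div_eq_of_eq_mul_right (ramOrder_pos ℓ)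
    (kerSub_card hℓ0 hℓ_nonneg hℓ_lt hℓ_int).symm).symm
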